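/- (Boundary dichotomy for the return domain.) Let U := {x ∈ Σ \ C : ∃ t > 0, φ(t, x) ∈ Σ \ C}. Suppose x ∈ Σ \ C with x ∉ U, and let (x_k) be a sequence in U with x_k → x and let t_k > 0 satisfy φ(t_k, x_k) ∈ Σ \ C for each k. Then every real limit point t* of the sequence (t_k) satisfies t* > 0 and φ(t*, x) ∈ C. In particular, if the forward orbit {φ(t, x) : t > 0} never meets C, then t_k → ∞. -/

import Mathlib

open scoped RealInnerProductSpace

/-- Boundary dichotomy for the return domain: let
`U = {x ∈ Σ \ C : ∃ t > 0, φ t x ∈ Σ \ C}`. If `x ∈ Σ \ C` is not in `U`, `(x_k)` is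
a sequence in `U` converging to `x`, and `t_k > 0` satisfy `φ (t_k) (x_k) ∈ Σ \ C`,
then every real cluster point `t*` of `(t_k)` satisfies `t* > 0` and `φ t* x ∈ C`.
In particular, if the forward orbit of `x` never meets the tangency locus `C`, then
`t_k → ∞`. -/
theorem return_domain_boundary_dichotomy
    (n : ℕ) (hn : 1 ≤ n)
    (F : EuclideanSpace ℝ (Fin n) → EuclideanSpace ℝ (Fin n))
    (hFcont : Continuous F)
    (φ : ℝ → EuclideanSpace ℝ (Fin n) → EuclideanSpace ℝ (Fin n))
    (hφ : ContDiff ℝ 1 (fun p : ℝ × EuclideanSpace ℝ (Fin n) => φ p.1 p.2))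
    (hφ0 : ∀ x, φ 0 x = x)
    (hφadd : ∀ s t : ℝ, ∀ x, φ (s + t) x = φ s (φ t x))
    (hφF : ∀ (t : ℝ) (x : EuclideanSpace ℝ (Fin n)),
      HasDerivAt (fun τ : ℝ => φ τ x) (F (φ t x)) t)
    (ν : EuclideanSpace ℝ (Fin n)) (hν : ν ≠ 0) (a : ℝ)
    (x : EuclideanSpace ℝ (Fin n))
    (hxSigma : ⟪x, ν⟫ = a) (hxC : ⟪F x, ν⟫ ≠ 0)
    (hxU : ¬ ∃ t > (0 : ℝ), ⟪φ t x, ν⟫ = a ∧ ⟪F (φ t x), ν⟫ ≠ 0)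
    (xk : ℕ → EuclideanSpace ℝ (Fin n)) (tk : ℕ → ℝ)
    (hxkU : ∀ k, (⟪xk k, ν⟫ = a ∧ ⟪F (xk k), ν⟫ ≠ 0) ∧
      ∃ t > (0 : ℝ), ⟪φ t (xk k), ν⟫ = a ∧ ⟪F (φ t (xk k)), ν⟫ ≠ 0)
    (hxkx : Filter.Tendsto xk Filter.atTop (nhds x))
    (htk : ∀ k, 0 < tk k ∧ ⟪φ (tk k) (xk k), ν⟫ = a ∧ ⟪F (φ (tk k) (xk k)), ν⟫ ≠ 0) :
    (∀ tstar : ℝ, MapClusterPt tstar Filter.atTop tk →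
        0 < tstar ∧ (⟪φ tstar x, ν⟫ = a ∧ ⟪F (φ tstar x), ν⟫ = 0)) ∧
    ((∀ t > (0 : ℝ), ¬ (⟪φ t x, ν⟫ = a ∧ ⟪F (φ t x), ν⟫ = 0)) →
        Filter.Tendsto tk Filter.atTop Filter.atTop) := by

  classical
  have hΦ : Continuous (fun p : ℝ × EuclideanSpace ℝ (Fin n) => φ p.1 p.2) := hφ.continuous
  -- derivative of t ↦ ⟪φ t y, ν⟫
  have hderiv : ∀ (y : EuclideanSpace ℝ (Fin n)) (t : ℝ),
      HasDerivAt (fun τ : ℝ => ⟪φ τ y, ν⟫) ⟪F (φ t y), ν⟫ t := by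
    intro y t
    have h := ((innerSL ℝ ν).hasFDerivAt (x := φ t y)).comp_hasDerivAt t (hφF t y)
    simpa only [Function.comp_def, innerSL_apply_apply, real_inner_comm] using h
  have hg : Continuous (fun p : ℝ × EuclideanSpace ℝ (Fin n) => ⟪F (φ p.1 p.2), ν⟫) :=
    (hFcont.comp hΦ).inner continuous_const
  -- main claim: every cluster point is positive and the flow hits the tangency locus there
  have main : ∀ tstar : ℝ, MapClusterPt tstar Filter.atTop tk →
      0 < tstar ∧ (⟪φ tstar x, ν⟫ = a ∧ ⟪F (φ tstar x), ν⟫ = 0) := by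
    intro tstar hcl
    obtain ⟨ψ, hψmono, hψtend⟩ := TopologicalSpace.FirstCountableTopology.tendsto_subseq hcl
    have hxψ : Filter.Tendsto (fun m => xk (ψ m)) Filter.atTop (nhds x) :=
      hxkx.comp hψmono.tendsto_atTop
    have hpair : Filter.Tendsto (fun m => ((tk (ψ m) : ℝ), xk (ψ m))) Filter.atTop
        (nhds (tstar, x)) := hψtend.prodMk_nhds hxψ
    have hflow : Filter.Tendsto (fun m => φ (tk (ψ m)) (xk (ψ m))) Filter.atTop
        (nhds (φ tstar x)) := (hΦ.tendsto _).comp hpair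
    have hSa : ⟪φ tstar x, ν⟫ = a := by
      have h1 : Filter.Tendsto (fun m => ⟪φ (tk (ψ m)) (xk (ψ m)), ν⟫) Filter.atTop
          (nhds ⟪φ tstar x, ν⟫) :=
        ((continuous_id.inner (continuous_const : Continuous fun _ => ν)).tendsto _).comp hflow
      have h2 : (fun m => ⟪φ (tk (ψ m)) (xk (ψ m)), ν⟫) = fun _ => a := by
        funext m; exact (htk (ψ m)).2.1
      rw [h2] at h1
      exact tendsto_nhds_unique h1 tendsto_const_nhds
    have htnonneg : 0 ≤ tstar :=
      le_of_tendsto_of_tendsto tendsto_const_nhds hψtend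
        (Filter.Eventually.of_forall fun m => (htk (ψ m)).1.le)
    have htpos : 0 < tstar := by
      rcases htnonneg.lt_or_eq with h | h
      · exact h
      exfalso
      -- tstar = 0 : mean value theorem contradiction near (0, x)
      have h0 : tstar = 0 := h.symm
      set g0 : ℝ := ⟪F x, ν⟫ with hg0
      have hWopen : IsOpen {p : ℝ × EuclideanSpace ℝ (Fin n) |
          |⟪F (φ p.1 p.2), ν⟫ - g0| < |g0|} := by
        have h1 : Continuous (fun p : ℝ × EuclideanSpace ℝ (Fin n) =>
            |⟪F (φ p.1 p.2), ν⟫ - g0|) := (hg.sub continuous_const).abs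
        exact isOpen_lt h1 continuous_const
      have hWmem : ((0 : ℝ), x) ∈ {p : ℝ × EuclideanSpace ℝ (Fin n) |
          |⟪F (φ p.1 p.2), ν⟫ - g0| < |g0|} := by
        simp only [Set.mem_setOf_eq, hφ0, hg0, sub_self, abs_zero]
        exact abs_pos.2 hxC
      have hW : {p : ℝ × EuclideanSpace ℝ (Fin n) |
          |⟪F (φ p.1 p.2), ν⟫ - g0| < |g0|} ∈ nhds ((0 : ℝ), x) :=
        hWopen.mem_nhds hWmem
      rcases mem_nhds_prod_iff'.1 hW with ⟨u, v, hu, h0u, hv, hxv, huv⟩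
      obtain ⟨ε, hε, hball⟩ := Metric.isOpen_iff.1 hu 0 h0u
      have hev1 : ∀ᶠ m in Filter.atTop, tk (ψ m) < ε := by
        have := hψtend.eventually (eventually_lt_nhds (h0 ▸ hε : tstar < ε))
        exact this
      have hev2 : ∀ᶠ m in Filter.atTop, xk (ψ m) ∈ v := hxψ (hv.mem_nhds hxv)
      obtain ⟨m, hm1, hm2⟩ := (hev1.and hev2).exists
      have hpos := (htk (ψ m)).1
      -- MVT on [0, tk (ψ m)]
      have hcontOn : ContinuousOn (fun τ : ℝ => ⟪φ τ (xk (ψ m)), ν⟫)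
          (Set.Icc 0 (tk (ψ m))) := by
        apply Continuous.continuousOn
        have : Continuous (fun τ : ℝ => φ τ (xk (ψ m))) :=
          hΦ.comp (continuous_id.prodMk continuous_const)
        exact this.inner continuous_const
      obtain ⟨c, hc, hceq⟩ := exists_hasDerivAt_eq_slope
        (fun τ : ℝ => ⟪φ τ (xk (ψ m)), ν⟫) (fun τ : ℝ => ⟪F (φ τ (xk (ψ m))), ν⟫)
        hpos hcontOn (fun τ _ => hderiv (xk (ψ m)) τ)
      have hzero : ⟪F (φ c (xk (ψ m))), ν⟫ = 0 := by
        rw [hceq, (htk (ψ m)).2.1]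
        rw [hφ0]
        rw [(hxkU (ψ m)).1.1]
        simp
      have hcmem : (c, xk (ψ m)) ∈ u ×ˢ v := by
        constructor
        · apply hball
          simp only [Metric.mem_ball, Real.dist_eq, sub_zero]
          rw [abs_of_pos hc.1]
          exact hc.2.trans hm1
        · exact hm2
      have := huv hcmem
      simp only [Set.mem_setOf_eq, hzero, zero_sub, abs_neg] at this
      exact absurd this (lt_irrefl _)
    refine ⟨htpos, hSa, ?_⟩
    by_contra hne
    exact hxU ⟨tstar, htpos, hSa, hne⟩
  refine ⟨main, ?_⟩
  intro hforward
  by_contra hnot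
  rw [Filter.tendsto_atTop] at hnot
  push_neg at hnot
  obtain ⟨M, hM⟩ := hnot
  have hfreq : ∃ᶠ k in Filter.atTop, tk k < M :=
    (Filter.not_eventually.1 hM).mono fun k hk => not_not.1 hk
  have hneBot : (Filter.atTop ⊓ Filter.principal {k : ℕ | tk k < M}).NeBot :=
    Filter.frequently_iff_neBot.1 hfreq
  set f := Filter.map tk (Filter.atTop ⊓ Filter.principal {k : ℕ | tk k < M}) with hf
  have hfne : f.NeBot := Filter.NeBot.map hneBot tk
  have hfle : f ≤ Filter.principal (Set.Icc 0 M) := by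
    rw [hf, Filter.map_le_iff_le_comap, Filter.le_def]
    intro s hs
    rcases Filter.mem_comap.1 hs with ⟨t, ht, hts⟩
    have : Set.Icc (0:ℝ) M ∈ Filter.principal (Set.Icc (0:ℝ) M) := Filter.mem_principal_self _
    have htIcc : Set.Icc (0:ℝ) M ⊆ t := Filter.mem_principal.1 ht
    apply Filter.mem_inf_of_right
    rw [Filter.mem_principal]
    intro k hk
    apply hts
    exact htIcc ⟨(htk k).1.le, le_of_lt hk⟩
  obtain ⟨tstar, _, hclf⟩ := (isCompact_Icc (a := (0:ℝ)) (b := M)).exists_clusterPt hfle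
  have hcl : MapClusterPt tstar Filter.atTop tk := by
    have : f ≤ Filter.map tk Filter.atTop := Filter.map_mono inf_le_left
    exact hclf.mono this
  obtain ⟨htpos, hSa, hF0⟩ := main tstar hcl
  exact hforward tstar htpos ⟨hSa, hF0⟩
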